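/- Let v be a C² vector field on a helical domain Ω ⊆ ℝ³ which is helical and divergence-free, with vorticity w = (w₁,w₂,w₃) = ∇×v, helical swirl v_ξ = v·ξ, orthogonal part u = v − v_ξ ξ/|ξ|², and ζ = (ζ₁,ζ₂,ζ₃) = ∇×u. Then pointwise on Ω: (i) w = (w₃/h) ξ + (1/h)(∂_{x₂}v_ξ, −∂_{x₁}v_ξ, 0), i.e. w₁ = (x₂ w₃ + ∂_{x₂}v_ξ)/h and w₂ = (−x₁ w₃ − ∂_{x₁}v_ξ)/h; and (ii) w₃ = ζ₃ − 2h² v_ξ/|ξ|⁴ − (x₁ ∂_{x₁}v_ξ + x₂ ∂_{x₂}v_ξ)/|ξ|². -/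

import Mathlib

noncomputable section

open Real

/-- ℝ³ as functions `Fin 3 → ℝ`. -/
abbrev V3 := Fin 3 → ℝ

/-- Partial derivative `∂_{x_i} f` of a scalar function on ℝ³. -/
def pd3 (i : Fin 3) (f : V3 → ℝ) (x : V3) : ℝ := fderiv ℝ f x (Pi.single i 1)

/-- The helical transformation `H_θ(x) = Q_θ x + (0,0,hθ)`. -/
def Hmap (h θ : ℝ) (x : V3) : V3 :=
  ![x 0 * Real.cos θ + x 1 * Real.sin θ,
    -(x 0) * Real.sin θ + x 1 * Real.cos θ,
    x 2 + h * θ]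

/-- The rotation `Q_θ = diag(R_θ, 1)` acting on vectors of ℝ³. -/
def Qrot (θ : ℝ) (v : V3) : V3 :=
  ![v 0 * Real.cos θ + v 1 * Real.sin θ,
    -(v 0) * Real.sin θ + v 1 * Real.cos θ,
    v 2]

/-- The vector field `ξ(x) = (x₂, −x₁, h)`. -/
def xiVec (h : ℝ) (x : V3) : V3 := ![x 1, -(x 0), h]

/-- `|ξ(x)|² = h² + x₁² + x₂²`. -/
def xiNormSq (h : ℝ) (x : V3) : ℝ := h ^ 2 + (x 0) ^ 2 + (x 1) ^ 2

/-- The helical swirl `v_ξ = v ⋅ ξ`. -/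
def swirl (h : ℝ) (v : V3 → V3) (x : V3) : ℝ := ∑ i : Fin 3, v x i * xiVec h x i

/-- The orthogonal part `u = v − v_ξ ξ / |ξ|²` of a vector field `v`. -/
def orthPart (h : ℝ) (v : V3 → V3) (x : V3) : V3 :=
  fun i => v x i - swirl h v x * xiVec h x i / xiNormSq h x

/-- The curl `∇ × u` of a vector field on ℝ³. -/
def curl3 (u : V3 → V3) (x : V3) : V3 :=
  ![pd3 1 (fun y => u y 2) x - pd3 2 (fun y => u y 1) x,
    pd3 2 (fun y => u y 0) x - pd3 0 (fun y => u y 2) x,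
    pd3 0 (fun y => u y 1) x - pd3 1 (fun y => u y 0) x]

section Helpers

variable {f g : V3 → ℝ} {x : V3} {j : Fin 3}

lemma pd3_add (hf : DifferentiableAt ℝ f x) (hg : DifferentiableAt ℝ g x) :
    pd3 j (fun y => f y + g y) x = pd3 j f x + pd3 j g x := by
  simp [pd3, fderiv_fun_add hf hg]

lemma pd3_sub (hf : DifferentiableAt ℝ f x) (hg : DifferentiableAt ℝ g x) :
    pd3 j (fun y => f y - g y) x = pd3 j f x - pd3 j g x := by
  simp [pd3, fderiv_fun_sub hf hg]

lemma pd3_mul (hf : DifferentiableAt ℝ f x) (hg : DifferentiableAt ℝ g x) :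
    pd3 j (fun y => f y * g y) x = f x * pd3 j g x + g x * pd3 j f x := by
  simp [pd3, fderiv_fun_mul hf hg]

lemma pd3_const (c : ℝ) : pd3 j (fun _ => c) x = 0 := by simp [pd3]

lemma pd3_mul_const (c : ℝ) (hf : DifferentiableAt ℝ f x) :
    pd3 j (fun y => f y * c) x = pd3 j f x * c := by
  simp [pd3, fderiv_mul_const hf c]; ring

lemma pd3_neg : pd3 j (fun y => -(f y)) x = -pd3 j f x := by
  simp [pd3]

lemma pd3_coord (i : Fin 3) : pd3 j (fun y => y i) x = if i = j then 1 else 0 := by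
  have : fderiv ℝ (fun y : V3 => y i) x = ContinuousLinearMap.proj i :=
    (ContinuousLinearMap.proj i : V3 →L[ℝ] ℝ).fderiv
  simp [pd3, this, Pi.single_apply]

lemma pd3_inv (hg : DifferentiableAt ℝ g x) (hgx : g x ≠ 0) :
    pd3 j (fun y => (g y)⁻¹) x = -pd3 j g x / g x ^ 2 := by
  have h3 := (hasDerivAt_inv hgx).comp_hasFDerivAt x hg.hasFDerivAt
  rw [show (fun y => (g y)⁻¹) = (fun t : ℝ => t⁻¹) ∘ g from rfl, pd3, h3.fderiv]
  simp [pd3]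
  ring

lemma pd3_div (hf : DifferentiableAt ℝ f x) (hg : DifferentiableAt ℝ g x) (hgx : g x ≠ 0) :
    pd3 j (fun y => f y / g y) x = (g x * pd3 j f x - f x * pd3 j g x) / g x ^ 2 := by
  have : (fun y => f y / g y) = fun y => f y * (g y)⁻¹ := by
    funext y; rw [div_eq_mul_inv]
  rw [this, pd3_mul (g := fun y => (g y)⁻¹) hf (hg.inv hgx), pd3_inv hg hgx]
  field_simp
  ring

lemma diffAt_div (hf : DifferentiableAt ℝ f x) (hg : DifferentiableAt ℝ g x)
    (hgx : g x ≠ 0) : DifferentiableAt ℝ (fun y => f y / g y) x := by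
  simp only [div_eq_mul_inv]; exact hf.mul (hg.inv hgx)

lemma diffAt_coord (i : Fin 3) : DifferentiableAt ℝ (fun y : V3 => y i) x :=
  (ContinuousLinearMap.proj i : V3 →L[ℝ] ℝ).differentiableAt

lemma helical_dir (h : ℝ) (v : V3 → V3)
    (i : Fin 3) (x : V3)
    (hdi : DifferentiableAt ℝ (fun y => v y i) x)
    (hhel : ∀ θ : ℝ, v (Hmap h θ x) = Qrot θ (v x)) :
    x 1 * pd3 0 (fun y => v y i) x - x 0 * pd3 1 (fun y => v y i) x
      + h * pd3 2 (fun y => v y i) x = ![v x 1, -(v x 0), 0] i := by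
  have hH0 : Hmap h 0 x = x := by
    funext k; fin_cases k <;> simp [Hmap]
  have hg : HasDerivAt (fun θ => Hmap h θ x) (xiVec h x) 0 := by
    rw [hasDerivAt_pi]
    intro k
    fin_cases k
    · have := ((hasDerivAt_cos 0).const_mul (x 0)).fun_add ((hasDerivAt_sin 0).const_mul (x 1))
      simpa [Hmap, xiVec] using this
    · have := ((hasDerivAt_sin 0).const_mul (-(x 0))).fun_add ((hasDerivAt_cos 0).const_mul (x 1))
      simpa [Hmap, xiVec] using this
    · have := ((hasDerivAt_id (0:ℝ)).const_mul h).const_add (x 2)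
      simpa [Hmap, xiVec] using this
  have hf : HasFDerivAt (fun y => v y i) (fderiv ℝ (fun y => v y i) x)
      ((fun θ => Hmap h θ x) 0) := by
    rw [show (fun θ => Hmap h θ x) 0 = x from hH0]
    exact hdi.hasFDerivAt
  have hcomp := hf.comp_hasDerivAt 0 hg
  have heq : ((fun y => v y i) ∘ fun θ => Hmap h θ x) = fun θ => Qrot θ (v x) i := by
    funext θ; simp [Function.comp, hhel θ]
  rw [heq] at hcomp
  have hrhs : HasDerivAt (fun θ => Qrot θ (v x) i) (![v x 1, -(v x 0), 0] i) 0 := by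
    fin_cases i
    · have := ((hasDerivAt_cos 0).const_mul (v x 0)).fun_add ((hasDerivAt_sin 0).const_mul (v x 1))
      simpa [Qrot] using this
    · have := ((hasDerivAt_sin 0).const_mul (-(v x 0))).fun_add ((hasDerivAt_cos 0).const_mul (v x 1))
      simpa [Qrot] using this
    · simpa [Qrot] using (hasDerivAt_const (0:ℝ) (v x 2))
  have key := hcomp.unique hrhs
  have hxi : xiVec h x = x 1 • (Pi.single 0 1 : V3) + (-(x 0)) • (Pi.single 1 1 : V3)
      + h • (Pi.single 2 1 : V3) := by
    funext k; fin_cases k <;> simp [xiVec, Pi.single_apply]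
  rw [hxi] at key
  simp only [map_add, map_smul, smul_eq_mul] at key
  rw [pd3, pd3, pd3]
  rw [← key]
  ring

end Helpers

/-- For a helical divergence-free C² vector field `v` with vorticity `w = ∇×v`,
swirl `v_ξ`, orthogonal part `u` and `ζ = ∇×u`, one has
`w = (w₃/h) ξ + (1/h)(∂₂v_ξ, −∂₁v_ξ, 0)` and
`w₃ = ζ₃ − 2h²v_ξ/|ξ|⁴ − (x₁∂₁v_ξ + x₂∂₂v_ξ)/|ξ|²` on `Ω`. -/
theorem vorticity_decomposition (h : ℝ) (hh : 0 < h) (Ω : Set V3) (hΩopen : IsOpen Ω)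
    (hΩ : ∀ θ : ℝ, Hmap h θ '' Ω = Ω)
    (v : V3 → V3) (hv : ∀ i : Fin 3, ContDiffOn ℝ 2 (fun x => v x i) Ω)
    (hhel : ∀ θ : ℝ, ∀ x ∈ Ω, v (Hmap h θ x) = Qrot θ (v x))
    (hdiv : ∀ x ∈ Ω, ∑ i : Fin 3, pd3 i (fun y => v y i) x = 0) :
    ∀ x ∈ Ω,
      curl3 v x 0 = (x 1 * curl3 v x 2 + pd3 1 (swirl h v) x) / h ∧
      curl3 v x 1 = (-(x 0) * curl3 v x 2 - pd3 0 (swirl h v) x) / h ∧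
      curl3 v x 2 = curl3 (orthPart h v) x 2
          - 2 * h ^ 2 * swirl h v x / (xiNormSq h x) ^ 2
          - (x 0 * pd3 0 (swirl h v) x + x 1 * pd3 1 (swirl h v) x) / xiNormSq h x := by
  intro x hx
  have hd : ∀ i : Fin 3, DifferentiableAt ℝ (fun y => v y i) x := fun i =>
    ((hv i).contDiffAt (hΩopen.mem_nhds hx)).differentiableAt (by norm_num)
  -- swirl as an explicit function
  have hsw : swirl h v = fun y => v y 0 * y 1 + v y 1 * -(y 0) + v y 2 * h := by
    funext y; simp [swirl, xiVec, Fin.sum_univ_three]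
  have hdsw : DifferentiableAt ℝ (swirl h v) x := by
    rw [hsw]
    exact (((hd 0).fun_mul (diffAt_coord 1)).fun_add ((hd 1).fun_mul (diffAt_coord 0).fun_neg)).add
      ((hd 2).mul_const h)
  have hNf : xiNormSq h = fun y : V3 => h * h + y 0 * y 0 + y 1 * y 1 := by
    funext y; simp [xiNormSq]; ring
  have hdN : DifferentiableAt ℝ (xiNormSq h) x := by
    rw [hNf]
    exact ((differentiableAt_const _).fun_add ((diffAt_coord 0).fun_mul (diffAt_coord 0))).add
      ((diffAt_coord 1).fun_mul (diffAt_coord 1))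
  have hNpos : 0 < xiNormSq h x := by
    have h1 : 0 < h ^ 2 := by positivity
    have h2 : 0 ≤ (x 0) ^ 2 := sq_nonneg _
    have h3 : 0 ≤ (x 1) ^ 2 := sq_nonneg _
    simp only [xiNormSq]; linarith
  have hN0 : xiNormSq h x ≠ 0 := ne_of_gt hNpos
  -- partial derivatives of the swirl
  have hds0 : pd3 0 (swirl h v) x
      = x 1 * pd3 0 (fun y => v y 0) x - v x 1 - x 0 * pd3 0 (fun y => v y 1) x
        + h * pd3 0 (fun y => v y 2) x := by
    rw [hsw,
      pd3_add (((hd 0).fun_mul (diffAt_coord 1)).fun_add ((hd 1).fun_mul (diffAt_coord 0).fun_neg))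
        ((hd 2).mul_const h),
      pd3_add ((hd 0).fun_mul (diffAt_coord 1)) ((hd 1).fun_mul (diffAt_coord 0).fun_neg),
      pd3_mul (hd 0) (diffAt_coord 1),
      pd3_mul (hd 1) (diffAt_coord 0).fun_neg,
      pd3_mul_const h (hd 2),
      pd3_neg, pd3_coord, pd3_coord]
    norm_num
    ring
  have hds1 : pd3 1 (swirl h v) x
      = v x 0 + x 1 * pd3 1 (fun y => v y 0) x - x 0 * pd3 1 (fun y => v y 1) x
        + h * pd3 1 (fun y => v y 2) x := by
    rw [hsw,
      pd3_add (((hd 0).fun_mul (diffAt_coord 1)).fun_add ((hd 1).fun_mul (diffAt_coord 0).fun_neg))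
        ((hd 2).mul_const h),
      pd3_add ((hd 0).fun_mul (diffAt_coord 1)) ((hd 1).fun_mul (diffAt_coord 0).fun_neg),
      pd3_mul (hd 0) (diffAt_coord 1),
      pd3_mul (hd 1) (diffAt_coord 0).fun_neg,
      pd3_mul_const h (hd 2),
      pd3_neg, pd3_coord, pd3_coord]
    norm_num
    ring
  -- partial derivatives of |ξ|²
  have hdN0 : pd3 0 (xiNormSq h) x = 2 * x 0 := by
    rw [hNf,
      pd3_add ((differentiableAt_const _).fun_add ((diffAt_coord 0).fun_mul (diffAt_coord 0)))
        ((diffAt_coord 1).fun_mul (diffAt_coord 1)),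
      pd3_add (differentiableAt_const _) ((diffAt_coord 0).fun_mul (diffAt_coord 0)),
      pd3_mul (diffAt_coord 0) (diffAt_coord 0),
      pd3_mul (diffAt_coord 1) (diffAt_coord 1),
      pd3_const, pd3_coord, pd3_coord]
    norm_num
    ring
  have hdN1 : pd3 1 (xiNormSq h) x = 2 * x 1 := by
    rw [hNf,
      pd3_add ((differentiableAt_const _).fun_add ((diffAt_coord 0).fun_mul (diffAt_coord 0)))
        ((diffAt_coord 1).fun_mul (diffAt_coord 1)),
      pd3_add (differentiableAt_const _) ((diffAt_coord 0).fun_mul (diffAt_coord 0)),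
      pd3_mul (diffAt_coord 0) (diffAt_coord 0),
      pd3_mul (diffAt_coord 1) (diffAt_coord 1),
      pd3_const, pd3_coord, pd3_coord]
    norm_num
    ring
  -- helical relations
  have hrel0 := helical_dir h v 0 x (hd 0) (fun θ => hhel θ x hx)
  have hrel1 := helical_dir h v 1 x (hd 1) (fun θ => hhel θ x hx)
  simp only [Matrix.cons_val_zero, Matrix.cons_val_one, Matrix.head_cons] at hrel0 hrel1
  refine ⟨?_, ?_, ?_⟩
  · -- first component
    simp only [curl3, Matrix.cons_val_zero, Matrix.cons_val_one, Matrix.head_cons,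
      Matrix.cons_val_two, Matrix.tail_cons]
    rw [hds1, eq_div_iff (ne_of_gt hh)]
    linear_combination (-1 : ℝ) * hrel1
  · -- second component
    simp only [curl3, Matrix.cons_val_zero, Matrix.cons_val_one, Matrix.head_cons,
      Matrix.cons_val_two, Matrix.tail_cons]
    rw [hds0, eq_div_iff (ne_of_gt hh)]
    linear_combination hrel0
  · -- third component
    have hu1 : (fun y => orthPart h v y 1)
        = fun y => v y 1 - swirl h v y * -(y 0) / xiNormSq h y := by
      funext y; simp [orthPart, xiVec]
    have hu0 : (fun y => orthPart h v y 0)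
        = fun y => v y 0 - swirl h v y * y 1 / xiNormSq h y := by
      funext y; simp [orthPart, xiVec]
    simp only [curl3, Matrix.cons_val_zero, Matrix.cons_val_one, Matrix.head_cons,
      Matrix.cons_val_two, Matrix.tail_cons]
    rw [hu1, hu0,
      pd3_sub (hd 1) (diffAt_div (hdsw.fun_mul (diffAt_coord 0).fun_neg) hdN hN0),
      pd3_sub (hd 0) (diffAt_div (hdsw.fun_mul (diffAt_coord 1)) hdN hN0),
      pd3_div (hdsw.fun_mul (diffAt_coord 0).fun_neg) hdN hN0,
      pd3_div (hdsw.fun_mul (diffAt_coord 1)) hdN hN0,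
      pd3_mul hdsw (diffAt_coord 0).fun_neg,
      pd3_mul hdsw (diffAt_coord 1),
      pd3_neg, pd3_coord, pd3_coord, hdN0, hdN1]
    have hNx : xiNormSq h x = h ^ 2 + (x 0) ^ 2 + (x 1) ^ 2 := rfl
    rw [hNx] at hN0 ⊢
    norm_num
    field_simp
    ring
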